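/- Let z_j = ρ e^{i(θ + 2πj/d)} for j = 0, ..., d-1, where ρ > 0 and θ ∈ ℝ, and d ≥ 2. Then max_{0 ≤ j ≤ d-1} | (1 - z_j)² / (2 z_j) | ≥ 1. -/

import Mathlib

open Real Finset in
lemma sum_cos_zero15 (d : ℕ) (hd : 2 ≤ d) (θ : ℝ) :
    ∑ j ∈ Finset.range d, Real.cos (θ + 2 * Real.pi * j / d) = 0 := by
  have hd0 : (d : ℂ) ≠ 0 := Nat.cast_ne_zero.mpr (by omega)
  have h2 : (2 : ℂ) * Real.pi * Complex.I ≠ 0 := by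
    simp [Real.pi_ne_zero, Complex.I_ne_zero, Complex.ofReal_ne_zero]
  have hS : ∑ j ∈ Finset.range d,
      Complex.exp (((θ + 2 * Real.pi * j / d : ℝ) : ℂ) * Complex.I) = 0 := by
    have hrw : ∀ j ∈ Finset.range d,
        Complex.exp (((θ + 2 * Real.pi * j / d : ℝ) : ℂ) * Complex.I)
          = Complex.exp ((θ:ℂ) * Complex.I) * (Complex.exp (2 * Real.pi * Complex.I / d)) ^ j := by
      intro j _
      rw [← Complex.exp_nat_mul, ← Complex.exp_add]
      congr 1
      push_cast
      field_simp
    rw [Finset.sum_congr rfl hrw, ← Finset.mul_sum]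
    have hne : Complex.exp (2 * Real.pi * Complex.I / d) ≠ 1 := by
      intro h
      rw [Complex.exp_eq_one_iff] at h
      obtain ⟨n, hn⟩ := h
      have h1 : (1 : ℂ) = n * d := by
        have h := hn
        field_simp at h
        have : (2 * Real.pi * Complex.I) * 1 = (2 * Real.pi * Complex.I) * ((n:ℂ) * d) := by
          rw [mul_one]; linear_combination (2 * Real.pi * Complex.I) * h
        exact mul_left_cancel₀ h2 this
      have h1' : (1 : ℤ) = n * d := by exact_mod_cast h1
      have : (d : ℤ) ∣ 1 := ⟨n, by linarith [h1']⟩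
      have := Int.le_of_dvd one_pos this
      omega
    rw [geom_sum_eq hne]
    have hpow : Complex.exp (2 * Real.pi * Complex.I / d) ^ d = 1 := by
      rw [← Complex.exp_nat_mul]
      have : (d : ℂ) * (2 * Real.pi * Complex.I / d) = 2 * Real.pi * Complex.I := by
        field_simp
      rw [this, Complex.exp_two_pi_mul_I]
    rw [hpow]
    simp
  calc ∑ j ∈ Finset.range d, Real.cos (θ + 2 * Real.pi * j / d)
      = ∑ j ∈ Finset.range d,
          (Complex.exp (((θ + 2 * Real.pi * j / d : ℝ) : ℂ) * Complex.I)).re :=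
        Finset.sum_congr rfl (fun j _ => (Complex.exp_ofReal_mul_I_re _).symm)
    _ = (∑ j ∈ Finset.range d,
          Complex.exp (((θ + 2 * Real.pi * j / d : ℝ) : ℂ) * Complex.I)).re :=
        (Complex.re_sum _ _).symm
    _ = 0 := by rw [hS]; rfl

open Real in
/-- For z_j = ρ e^{i(θ + 2πj/d)}, j = 0,...,d-1, with ρ > 0 and d ≥ 2, some j
satisfies |(1-z_j)²/(2z_j)| ≥ 1. -/
theorem stmt15 (d : ℕ) (hd : 2 ≤ d) (ρ θ : ℝ) (hρ : 0 < ρ) :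
    ∃ j ∈ Finset.range d,
      1 ≤ ‖((1 - (ρ : ℂ) * Complex.exp (Complex.I * (θ + 2 * Real.pi * j / d))) ^ 2 /
            (2 * ((ρ : ℂ) * Complex.exp (Complex.I * (θ + 2 * Real.pi * j / d)))))‖ := by
  have hsum := sum_cos_zero15 d hd θ
  have hex : ∃ j ∈ Finset.range d, Real.cos (θ + 2 * Real.pi * j / d) ≤ 0 := by
    by_contra hc
    push_neg at hc
    have hpos : 0 < ∑ j ∈ Finset.range d, Real.cos (θ + 2 * Real.pi * j / d) :=
      Finset.sum_pos (fun j hj => hc j hj) ⟨0, Finset.mem_range.mpr (by omega)⟩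
    linarith
  obtain ⟨j, hj, hcos⟩ := hex
  refine ⟨j, hj, ?_⟩
  set x : ℝ := θ + 2 * Real.pi * j / d with hx
  have hcast : (Complex.I * ((θ:ℂ) + 2 * (Real.pi:ℂ) * j / d)) = (x:ℂ) * Complex.I := by
    push_cast [hx]
    ring
  rw [hcast]
  have habs : ‖(1 - (ρ:ℂ) * Complex.exp ((x:ℂ) * Complex.I))‖ ^ 2
      = (1 - ρ * Real.cos x) ^ 2 + (ρ * Real.sin x) ^ 2 := by
    rw [Complex.sq_norm, Complex.normSq_apply]
    simp [Complex.exp_ofReal_mul_I_re, Complex.exp_ofReal_mul_I_im]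
    ring
  rw [norm_div, norm_pow, norm_mul, norm_mul, Complex.norm_exp_ofReal_mul_I, habs]
  have h2 : ‖(2:ℂ)‖ = 2 := by norm_num
  have hρ' : ‖(ρ:ℂ)‖ = ρ := by
    rw [Complex.norm_real, Real.norm_eq_abs, abs_of_pos hρ]
  rw [h2, hρ', mul_one]
  rw [le_div_iff₀ (by positivity)]
  nlinarith [Real.sin_sq_add_cos_sq x, sq_nonneg (1 - ρ)]
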